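/- Let G be a finite abelian group, H : S → G and V : T → G homomorphisms from finite groups S and T, and let M be a subset of G invariant under the action x·(s,t) = V(t)⁻¹·x·H(s) of S × T on G. Let M//(S×T) be the action groupoid with object set M and morphisms x₁ → x₂ the pairs (s,t) ∈ S × T with V(t)·x₁ = x₂·H(s). Then M//(S×T), with legs the functors to BS and BT sending (s,t) to s and to t respectively, and with ε : M ↪ G the inclusion, is a G-span from (BS, BH) to (BT, BV), and its matrix has single entry [M//(S×T), ε](•,•) = (1/|T|)·Σ_{x∈M} x in ℚG. -/

import Mathlib

open CategoryTheory

noncomputable section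

/-- The component set `π₀(C)`: isomorphism classes of objects of `C`. -/
abbrev Pi0 (C : Type*) [Category C] := Quotient (isIsomorphicSetoid C)

/-- Groupoid cardinality (Euler characteristic): the sum, over a set of representatives of
the isomorphism classes of objects, of the reciprocals of the orders of the automorphism
groups. -/
noncomputable def gcard (C : Type*) [Category C] : ℚ :=
  ∑ᶠ x : Pi0 C, (Nat.card (Aut (Quotient.out x)) : ℚ)⁻¹

/-- A functor into the one-object groupoid `BG`, identified with an assignment of elements
of `G` to morphisms (composition goes to multiplication in reverse order, matching the
convention `f ≫ g ↦ g·f` of `BG`). -/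
structure GFunctor (S : Type*) [Category S] (G : Type*) [Group G] where
  map : ∀ {a b : S}, (a ⟶ b) → G
  map_id : ∀ a : S, map (𝟙 a) = 1
  map_comp : ∀ {a b c : S} (f : a ⟶ b) (g : b ⟶ c), map (f ≫ g) = map g * map f

/-- The two-sided homotopy fibre `c\M/d` of a span `S ⟵L M ⟶R T`: objects are triples
`(s, a, t)` with `s : c ⟶ L a` and `t : R a ⟶ d`; morphisms are morphisms `m : a₁ ⟶ a₂`
of `M` with `L m ∘ s₁ = s₂` and `t₂ ∘ R m = t₁`. -/
abbrev TwoFibre {S T M : Type*} [Category S] [Category T] [Category M]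
    (L : M ⥤ S) (R : M ⥤ T) (c : S) (d : T) :=
  StructuredArrow c (CostructuredArrow.proj R d ⋙ L)

/-- The induced function `c\ε/d` on the two-sided homotopy fibre:
`(s,a,t) ↦ V(t)·ε(a)·H(s)`. -/
def twoEps {S T M : Type*} [Category S] [Category T] [Category M]
    {G : Type*} [Group G] (H : GFunctor S G) (V : GFunctor T G)
    (L : M ⥤ S) (R : M ⥤ T) (ε : M → G) {c : S} {d : T}
    (x : TwoFibre L R c d) : G :=
  V.map x.right.hom * ε x.right.left * H.map x.hom

/-- The matrix `[M, ε] : π₀(S) × π₀(T) → ℚG` of a `G`-span: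
`[M,ε](c,d) = |Aut_T(d)|⁻¹ · ∑_{g ∈ G} χ((c\M/d){c\ε/d = g}) · g`. -/
noncomputable def spanMatrix {S T M : Type*} [Category S] [Category T] [Category M]
    {G : Type*} [CommGroup G] [Fintype G]
    (H : GFunctor S G) (V : GFunctor T G)
    (L : M ⥤ S) (R : M ⥤ T) (ε : M → G)
    (c : Pi0 S) (d : Pi0 T) : MonoidAlgebra ℚ G :=
  ∑ g : G, MonoidAlgebra.single g
    ((Nat.card (Aut (Quotient.out d)) : ℚ)⁻¹ *
      gcard (ObjectProperty.FullSubcategory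
        (fun x : TwoFibre L R (Quotient.out c) (Quotient.out d) =>
          twoEps H V L R ε x = g)))

/-- A right action of a group `K` on a set `X`. -/
structure RightAction (K X : Type*) [Group K] where
  act : X → K → X
  act_one : ∀ x, act x 1 = x
  act_mul : ∀ x a b, act x (a * b) = act (act x a) b

/-- The action groupoid of an invariant subset `{x : X // P x}` of a right `K`-set `X`:
objects are the elements satisfying `P`, and morphisms `x₁ ⟶ x₂` are the elements `k ∈ K`
with `x₂ · k = x₁`. -/
structure ActionGroupoid {K X : Type*} [Group K] (ρ : RightAction K X) (P : X → Prop) where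
  pt : X
  mem : P pt

instance ActionGroupoid.groupoid {K X : Type*} [Group K] (ρ : RightAction K X)
    (P : X → Prop) : Groupoid (ActionGroupoid ρ P) where
  Hom x y := {k : K // ρ.act y.pt k = x.pt}
  id x := ⟨1, ρ.act_one _⟩
  comp {x y z} f g := ⟨g.1 * f.1, by rw [ρ.act_mul, g.2, f.2]⟩
  id_comp f := Subtype.ext (mul_one _)
  comp_id f := Subtype.ext (one_mul _)
  assoc f g h := Subtype.ext (mul_assoc h.1 g.1 f.1).symm
  inv {x y} f := ⟨f.1⁻¹, by
    have h : ρ.act (ρ.act y.pt f.1) f.1⁻¹ = y.pt := by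
      rw [← ρ.act_mul]; simp [ρ.act_one]
    rw [f.2] at h; exact h⟩
  inv_comp f := Subtype.ext (by simp)
  comp_inv f := Subtype.ext (by simp)

/-- The one-object groupoid `BK` of a group `K`. -/
structure BGrp (K : Type*) : Type where
  star ::

instance BGrp.groupoid (K : Type*) [Group K] : Groupoid (BGrp K) where
  Hom _ _ := K
  id _ := 1
  comp f g := g * f
  id_comp f := mul_one f
  comp_id f := one_mul f
  assoc f g h := (mul_assoc h g f).symm
  inv f := f⁻¹
  inv_comp f := by simp
  comp_inv f := by simp

/-- The functor `BK → BG` induced by a group homomorphism `K → G`. -/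
def GFunctor.ofHom {K G : Type*} [Group K] [Group G] (φ : K →* G) :
    GFunctor (BGrp K) G where
  map f := φ f
  map_id _ := map_one φ
  map_comp f g := map_mul φ g f

variable {G S T : Type*} [CommGroup G] [Group S] [Group T]

/-- The right action `x·(s,t) = V(t)⁻¹·x·H(s)` of `S × T` on `G`. -/
def spanRA (H : S →* G) (V : T →* G) : RightAction (S × T) G where
  act x p := (V p.2)⁻¹ * x * H p.1
  act_one x := by simp
  act_mul x a b := by simp [map_mul, mul_inv_rev, mul_assoc]

/-- The left leg `M//(S×T) ⥤ BS`, `(s,t) ↦ s`. -/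
def agFst (H : S →* G) (V : T →* G) (M : Set G) :
    ActionGroupoid (spanRA H V) (· ∈ M) ⥤ BGrp S where
  obj _ := ⟨⟩
  map f := f.1.1
  map_id _ := rfl
  map_comp _ _ := rfl

/-- The right leg `M//(S×T) ⥤ BT`, `(s,t) ↦ t`. -/
def agSnd (H : S →* G) (V : T →* G) (M : Set G) :
    ActionGroupoid (spanRA H V) (· ∈ M) ⥤ BGrp T where
  obj _ := ⟨⟩
  map f := f.1.2
  map_id _ := rfl
  map_comp _ _ := rfl

/-- In `BGrp K`, the automorphism group of any object has the cardinality of `K`. -/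
lemma bgrp_aut_card {K : Type*} [Group K] (X : BGrp K) :
    Nat.card (Aut X) = Nat.card K :=
  Nat.card_congr (Groupoid.isoEquivHom X X)

lemma key_cg {a b p q x y : G} (h : b * q * y = a * p * x) :
    (b⁻¹ * a)⁻¹ * q * (y * x⁻¹) = p := by
  rw [show (b⁻¹*a)⁻¹ * q * (y*x⁻¹) = a⁻¹ * (b*q*y) * x⁻¹ by group, h]; group

section FibLemmas

variable (H : S →* G) (V : T →* G) (M : Set G) {c₀ : BGrp S} {d₀ : BGrp T}

/-- Any two parallel morphisms in the two-sided fibre are equal. -/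
lemma fib_hom_subsingleton (X Y : TwoFibre (agFst H V M) (agSnd H V M) c₀ d₀)
    (f g : X ⟶ Y) : f = g := by
  apply StructuredArrow.hom_ext
  apply CostructuredArrow.hom_ext
  apply Subtype.ext
  have hf1 : f.right.left.1.1 * X.hom = Y.hom := StructuredArrow.w f
  have hg1 : g.right.left.1.1 * X.hom = Y.hom := StructuredArrow.w g
  have hf2 : Y.right.hom * f.right.left.1.2 = X.right.hom := CostructuredArrow.w f.right
  have hg2 : Y.right.hom * g.right.left.1.2 = X.right.hom := CostructuredArrow.w g.right
  exact Prod.ext (mul_right_cancel (hf1.trans hg1.symm))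
    (mul_left_cancel (hf2.trans hg2.symm))

/-- Objects of the two-sided fibre with the same `ε`-value are connected. -/
lemma fib_hom_exists (X Y : TwoFibre (agFst H V M) (agSnd H V M) c₀ d₀)
    (h : twoEps (GFunctor.ofHom H) (GFunctor.ofHom V) (agFst H V M) (agSnd H V M)
        (fun A => A.pt) X =
      twoEps (GFunctor.ofHom H) (GFunctor.ofHom V) (agFst H V M) (agSnd H V M)
        (fun A => A.pt) Y) :
    Nonempty (X ⟶ Y) := by
  have h' : V Y.right.hom * Y.right.left.pt * H Y.hom =
      V X.right.hom * X.right.left.pt * H X.hom := h.symm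
  refine ⟨StructuredArrow.homMk (CostructuredArrow.homMk
      (⟨(Y.hom * X.hom⁻¹, Y.right.hom⁻¹ * X.right.hom), ?_⟩ :
        X.right.left ⟶ Y.right.left) ?_) ?_⟩
  · show (V (Y.right.hom⁻¹ * X.right.hom))⁻¹ * Y.right.left.pt *
        H (Y.hom * X.hom⁻¹) = X.right.left.pt
    rw [map_mul, map_mul, map_inv, map_inv]
    exact key_cg h'
  · show Y.right.hom * (Y.right.hom⁻¹ * X.right.hom) = X.right.hom
    group
  · show (Y.hom * X.hom⁻¹) * X.hom = Y.hom
    group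

/-- The value-`g` part of the fibre, for `g ∈ M`, has groupoid cardinality `1`. -/
lemma gcard_fib_mem (hM : ∀ x ∈ M, ∀ (s : S) (t : T), (V t)⁻¹ * x * H s ∈ M)
    {g : G} (hg : g ∈ M) :
    gcard (ObjectProperty.FullSubcategory
      (fun x : TwoFibre (agFst H V M) (agSnd H V M) c₀ d₀ =>
        twoEps (GFunctor.ofHom H) (GFunctor.ofHom V) (agFst H V M) (agSnd H V M)
          (fun A => A.pt) x = g)) = 1 := by
  set P : TwoFibre (agFst H V M) (agSnd H V M) c₀ d₀ → Prop :=
    fun x => twoEps (GFunctor.ofHom H) (GFunctor.ofHom V) (agFst H V M) (agSnd H V M)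
      (fun A => A.pt) x = g with hP
  haveI hss : ∀ X Y : ObjectProperty.FullSubcategory P, Subsingleton (X ⟶ Y) :=
    fun X Y => ⟨fun f g => InducedCategory.hom_ext (fib_hom_subsingleton H V M X.obj Y.obj f.hom g.hom)⟩
  have iso : ∀ X Y : ObjectProperty.FullSubcategory P, Nonempty (X ≅ Y) := by
    intro X Y
    obtain ⟨f⟩ := fib_hom_exists H V M X.obj Y.obj (X.property.trans Y.property.symm)
    obtain ⟨f'⟩ := fib_hom_exists H V M Y.obj X.obj (Y.property.trans X.property.symm)
    exact ⟨⟨ObjectProperty.homMk f, ObjectProperty.homMk f', Subsingleton.elim _ _, Subsingleton.elim _ _⟩⟩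
  have X₀ : ObjectProperty.FullSubcategory P := by
    refine ⟨StructuredArrow.mk (Y := CostructuredArrow.mk
        (Y := (⟨g, hg⟩ : ActionGroupoid (spanRA H V) (· ∈ M))) (1 : T)) (1 : S), ?_⟩
    show V 1 * g * H 1 = g
    simp
  haveI : Nonempty (Pi0 (ObjectProperty.FullSubcategory P)) := ⟨Quotient.mk _ X₀⟩
  haveI : Subsingleton (Pi0 (ObjectProperty.FullSubcategory P)) := by
    constructor
    intro a b
    induction a using Quotient.ind
    induction b using Quotient.ind
    exact Quotient.sound (iso _ _)
  haveI : Unique (Pi0 (ObjectProperty.FullSubcategory P)) :=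
    ⟨⟨Quotient.mk _ X₀⟩, fun a => Subsingleton.elim a _⟩
  rw [gcard, finsum_unique]
  haveI : ∀ Z : ObjectProperty.FullSubcategory P, Subsingleton (Aut Z) :=
    fun Z => ⟨fun i j => Iso.ext (Subsingleton.elim _ _)⟩
  haveI : ∀ Z : ObjectProperty.FullSubcategory P, Nonempty (Aut Z) := fun Z => ⟨Iso.refl Z⟩
  rw [Nat.card_unique]
  norm_num

/-- The value-`g` part of the fibre, for `g ∉ M`, has groupoid cardinality `0`. -/
lemma gcard_fib_not_mem (hM : ∀ x ∈ M, ∀ (s : S) (t : T), (V t)⁻¹ * x * H s ∈ M)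
    {g : G} (hg : g ∉ M) :
    gcard (ObjectProperty.FullSubcategory
      (fun x : TwoFibre (agFst H V M) (agSnd H V M) c₀ d₀ =>
        twoEps (GFunctor.ofHom H) (GFunctor.ofHom V) (agFst H V M) (agSnd H V M)
          (fun A => A.pt) x = g)) = 0 := by
  set P : TwoFibre (agFst H V M) (agSnd H V M) c₀ d₀ → Prop :=
    fun x => twoEps (GFunctor.ofHom H) (GFunctor.ofHom V) (agFst H V M) (agSnd H V M)
      (fun A => A.pt) x = g with hP
  haveI : IsEmpty (ObjectProperty.FullSubcategory P) := by
    constructor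
    intro X
    apply hg
    have hx : X.obj.right.left.pt ∈ M := X.obj.right.left.mem
    have := hM _ hx X.obj.hom (X.obj.right.hom)⁻¹
    rw [map_inv, inv_inv] at this
    have hval : V X.obj.right.hom * X.obj.right.left.pt * H X.obj.hom = g := X.property
    rwa [hval] at this
  haveI : IsEmpty (Pi0 (ObjectProperty.FullSubcategory P)) :=
    ⟨fun q => Quotient.ind (motive := fun _ => False) (fun X => IsEmpty.false X) q⟩
  rw [gcard, finsum_of_isEmpty]

end FibLemmas

/-- Let `G` be a finite abelian group, `H : S →* G`, `V : T →* G` homomorphisms from finite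
groups, and `M ⊆ G` invariant under the action `x·(s,t) = V(t)⁻¹·x·H(s)` of `S × T` on `G`.
Then the action groupoid `M//(S×T)` — objects `M`, morphisms `x₁ ⟶ x₂` the pairs `(s,t)`
with `V(t)·x₁ = x₂·H(s)` — with legs `(s,t) ↦ s` to `BS` and `(s,t) ↦ t` to `BT` and with
`ε : M ↪ G` the inclusion, is a `G`-span from `(BS,BH)` to `(BT,BV)`, and its matrix has
single entry `[M//(S×T), ε](•,•) = |T|⁻¹ · ∑_{x∈M} x ∈ ℚG`. -/
theorem stmt13 [Fintype G] [Finite S] [Finite T]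
    (H : S →* G) (V : T →* G) (M : Set G)
    (hM : ∀ x ∈ M, ∀ (s : S) (t : T), (V t)⁻¹ * x * H s ∈ M) :
    (∀ (A B : ActionGroupoid (spanRA H V) (· ∈ M)) (m : A ⟶ B),
        B.pt * (GFunctor.ofHom H).map ((agFst H V M).map m) =
          (GFunctor.ofHom V).map ((agSnd H V M).map m) * A.pt) ∧
      ∀ (c : Pi0 (BGrp S)) (d : Pi0 (BGrp T)),
        spanMatrix (GFunctor.ofHom H) (GFunctor.ofHom V)
            (agFst H V M) (agSnd H V M) (fun A => A.pt) c d =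
          (Nat.card T : ℚ)⁻¹ • ∑ᶠ x : M, MonoidAlgebra.of ℚ G (x : G) := by
  classical
  constructor
  · intro A B m
    have hm : (V m.1.2)⁻¹ * B.pt * H m.1.1 = A.pt := m.2
    show B.pt * H m.1.1 = V m.1.2 * A.pt
    have h2 := congrArg (fun z => V m.1.2 * z) hm
    rw [show V m.1.2 * ((V m.1.2)⁻¹ * B.pt * H m.1.1) = B.pt * H m.1.1 by group] at h2
    exact h2
  · intro c d
    rw [spanMatrix]
    haveI : Fintype M := Fintype.ofFinite _
    have hL : ∀ g : G,
        MonoidAlgebra.single (R := ℚ) g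
          ((Nat.card (Aut (Quotient.out d)) : ℚ)⁻¹ *
            gcard (ObjectProperty.FullSubcategory
              (fun x : TwoFibre (agFst H V M) (agSnd H V M)
                  (Quotient.out c) (Quotient.out d) =>
                twoEps (GFunctor.ofHom H) (GFunctor.ofHom V) (agFst H V M) (agSnd H V M)
                  (fun A => A.pt) x = g))) =
          if g ∈ M then MonoidAlgebra.single g ((Nat.card T : ℚ)⁻¹) else 0 := by
      intro g
      by_cases hg : g ∈ M
      · rw [if_pos hg, gcard_fib_mem H V M hM hg, bgrp_aut_card, mul_one]
      · rw [if_neg hg, gcard_fib_not_mem H V M hM hg, mul_zero]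
        simp
    rw [Finset.sum_congr rfl (fun g _ => hL g), ← Finset.sum_filter,
      Finset.sum_subtype (p := (· ∈ M)) (Finset.univ.filter (· ∈ M)) (by simp) (fun g =>
        MonoidAlgebra.single (R := ℚ) g ((Nat.card T : ℚ)⁻¹)),
      finsum_eq_sum_of_fintype, Finset.smul_sum]
    refine Finset.sum_congr rfl fun x _ => ?_
    rw [MonoidAlgebra.of_apply, MonoidAlgebra.smul_single', mul_one]

end
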